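/- Let F be a finite field with q elements. The number of nonzero singular symmetric 3×3 matrices over F is (q−1)(q²+1)(q²+q+1). (Equivalently, the secant variety M³₄ of the Veronese surface in PG(5,q) has (q²+1)(q²+q+1) points, the same number as the hyperbolic quadric Q⁺(5,q).) -/

import Mathlib

set_option linter.unusedSectionVars false

open scoped Classical

section Aux
variable {F : Type*} [Field F] [Fintype F]

lemma card_prod_subtype {α β : Type*} [Fintype α] [Fintype β] (p : α → β → Prop) :
    Fintype.card {x : α × β // p x.1 x.2} = ∑ a, Fintype.card {b // p a b} := by
  rw [Fintype.card_congr (Equiv.subtypeProdEquivSigmaSubtype p), Fintype.card_sigma]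

lemma lin_count (u v : F) :
    Fintype.card {c : F // u * c = v} =
      if u ≠ 0 then 1 else if v = 0 then Fintype.card F else 0 := by
  by_cases hu : u = 0
  · subst hu
    by_cases hv : v = 0
    · subst hv
      rw [if_neg (by simp), if_pos rfl]
      exact Fintype.card_congr (Equiv.subtypeUnivEquiv (fun c => by simp))
    · rw [if_neg (by simp), if_neg hv]
      exact Fintype.card_eq_zero_iff.mpr ⟨fun c => hv (by simpa using c.2.symm)⟩
  · rw [if_pos hu]
    have h : ∀ c : F, u * c = v ↔ c = v / u := fun c => by
      rw [mul_comm, ← eq_div_iff hu]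
    rw [Fintype.card_congr (Equiv.subtypeEquivRight h), Fintype.card_subtype_eq]

def uu (w : F × F × F) : F := w.1 * w.2.1 - w.2.2 ^ 2

def vv (w : F × F × F) (p : F × F) : F :=
  w.1 * p.2 ^ 2 + w.2.1 * p.1 ^ 2 - 2 * w.2.2 * p.1 * p.2

lemma key_inner (w : F × F × F) :
    ∑ p : F × F, Fintype.card {c : F // uu w * c = vv w p} =
      if w = 0 then Fintype.card F ^ 3 else Fintype.card F ^ 2 := by
  obtain ⟨a, b, d⟩ := w
  by_cases hu : a * b - d ^ 2 = 0
  · -- degenerate linear coefficient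
    have hu' : uu (a, b, d) = 0 := hu
    have hstep : ∀ p : F × F, Fintype.card {c : F // uu (a, b, d) * c = vv (a, b, d) p} =
        if vv (a, b, d) p = 0 then Fintype.card F else 0 := by
      intro p; rw [lin_count, if_neg (by simp [hu'])]
    rw [Finset.sum_congr rfl (fun p _ => hstep p)]
    have hsum : ∑ p : F × F, (if vv (a, b, d) p = 0 then Fintype.card F else 0) =
        Fintype.card {p : F × F // vv (a, b, d) p = 0} * Fintype.card F := by
      rw [Fintype.card_subtype, ← Finset.sum_filter, Finset.sum_const, smul_eq_mul]
    rw [hsum]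
    by_cases ha : a = 0
    · have hd : d = 0 := by
        have : d ^ 2 = 0 := by rw [ha] at hu; linear_combination -hu
        exact pow_eq_zero_iff (by norm_num) |>.mp this
      by_cases hb : b = 0
      · subst ha; subst hb; subst hd
        rw [if_pos (show ((0 : F), (0 : F), (0 : F)) = (0 : F × F × F) from rfl)]
        have : ∀ p : F × F, vv ((0 : F), (0 : F), (0 : F)) p = 0 := by
          intro p; simp [vv]
        rw [Fintype.card_congr (Equiv.subtypeUnivEquiv this)]
        simp [pow_succ, mul_comm, mul_assoc]
      · -- a = 0, d = 0, b ≠ 0 : vv = b * e^2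
        subst ha; subst hd
        rw [if_neg (by simp [hb])]
        have hiff : ∀ p : F × F, vv ((0 : F), b, (0 : F)) p = 0 ↔ p.1 = 0 := by
          intro p
          simp only [vv]
          constructor
          · intro h
            have : b * p.1 ^ 2 = 0 := by linear_combination h
            rcases mul_eq_zero.mp this with h' | h'
            · exact absurd h' hb
            · exact pow_eq_zero_iff (by norm_num) |>.mp h'
          · intro h; rw [h]; ring
        rw [Fintype.card_congr (Equiv.subtypeEquivRight hiff)]
        have : Fintype.card {p : F × F // p.1 = 0} = Fintype.card F := by
          rw [card_prod_subtype (fun (e f : F) => e = 0)]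
          have hterm : ∀ e : F, Fintype.card {_f : F // e = 0} =
              if e = 0 then Fintype.card F else 0 := by
            intro e
            by_cases he : e = 0
            · rw [if_pos he]
              exact Fintype.card_congr (Equiv.subtypeUnivEquiv (fun _ => he))
            · rw [if_neg he]
              exact Fintype.card_eq_zero_iff.mpr ⟨fun f => he f.2⟩
          rw [Finset.sum_congr rfl (fun e _ => hterm e), Finset.sum_ite_eq' Finset.univ (0 : F)]
          simp
        rw [this, sq]
    · -- a ≠ 0
      rw [if_neg (by simp [ha])]
      have hab : a * b = d ^ 2 := by linear_combination hu
      have hiff : ∀ p : F × F, vv (a, b, d) p = 0 ↔ a * p.2 = d * p.1 := by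
        intro p
        have hsq : a * vv (a, b, d) p = (a * p.2 - d * p.1) ^ 2 := by
          simp only [vv]; linear_combination p.1 ^ 2 * hab
        constructor
        · intro h
          have : (a * p.2 - d * p.1) ^ 2 = 0 := by rw [← hsq, h, mul_zero]
          have := pow_eq_zero_iff (n := 2) (by norm_num) |>.mp this
          linear_combination this
        · intro h
          have h2 : (a * p.2 - d * p.1) ^ 2 = 0 := by rw [sub_eq_zero.mpr h]; ring
          rw [← hsq] at h2
          rcases mul_eq_zero.mp h2 with h' | h'
          · exact absurd h' ha
          · exact h'
      rw [Fintype.card_congr (Equiv.subtypeEquivRight hiff)]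
      have : Fintype.card {p : F × F // a * p.2 = d * p.1} = Fintype.card F := by
        rw [card_prod_subtype (fun (e f : F) => a * f = d * e)]
        have hterm : ∀ e : F, Fintype.card {f : F // a * f = d * e} = 1 := by
          intro e; rw [lin_count, if_pos ha]
        rw [Finset.sum_congr rfl (fun e _ => hterm e), Finset.sum_const, smul_eq_mul, mul_one,
          Finset.card_univ]
      rw [this, sq]
  · -- nondegenerate linear coefficient : one solution each
    have hw : ((a, b, d) : F × F × F) ≠ 0 := by
      intro h
      apply hu
      have h1 : a = 0 := congrArg Prod.fst h
      have h2 : b = 0 := congrArg (fun x => x.2.1) h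
      have h3 : d = 0 := congrArg (fun x => x.2.2) h
      rw [h1, h2, h3]; ring
    rw [if_neg hw]
    have hstep : ∀ p : F × F, Fintype.card {c : F // uu (a, b, d) * c = vv (a, b, d) p} = 1 := by
      intro p; rw [lin_count, if_pos (show uu (a, b, d) ≠ 0 from hu)]
    rw [Finset.sum_congr rfl (fun p _ => hstep p), Finset.sum_const, smul_eq_mul, mul_one,
      Finset.card_univ]
    simp [sq]

lemma count_main :
    Fintype.card {x : ((F × F × F) × F × F) × F // uu x.1.1 * x.2 = vv x.1.1 x.1.2} =
      (Fintype.card F ^ 3 - 1) * Fintype.card F ^ 2 + Fintype.card F ^ 3 := by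
  rw [card_prod_subtype (fun (y : (F × F × F) × F × F) (c : F) => uu y.1 * c = vv y.1 y.2)]
  rw [Fintype.sum_prod_type]
  rw [Finset.sum_congr rfl (fun w _ => key_inner w)]
  rw [← Finset.sum_erase_add _ _ (Finset.mem_univ (0 : F × F × F))]
  rw [Finset.sum_congr rfl (fun w hw => if_neg (Finset.ne_of_mem_erase hw))]
  rw [Finset.sum_const, smul_eq_mul, if_pos rfl,
    Finset.card_erase_of_mem (Finset.mem_univ _), Finset.card_univ]
  congr 2
  simp [pow_succ]
  ring

def toMat (x : ((F × F × F) × F × F) × F) : Matrix (Fin 3) (Fin 3) F :=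
  !![x.1.1.1, x.1.1.2.2, x.1.2.1;
     x.1.1.2.2, x.1.1.2.1, x.1.2.2;
     x.1.2.1, x.1.2.2, x.2]

lemma toMat_isSymm (x : ((F × F × F) × F × F) × F) : (toMat x).IsSymm := by
  rw [Matrix.IsSymm]
  ext i j
  fin_cases i <;> fin_cases j <;> simp [toMat]

lemma toMat_det (x : ((F × F × F) × F × F) × F) :
    (toMat x).det = uu x.1.1 * x.2 - vv x.1.1 x.1.2 := by
  simp [toMat, Matrix.det_fin_three, uu, vv]
  ring

def fromMat (M : Matrix (Fin 3) (Fin 3) F) : ((F × F × F) × F × F) × F :=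
  (((M 0 0, M 1 1, M 0 1), (M 0 2, M 1 2)), M 2 2)

lemma toMat_fromMat {M : Matrix (Fin 3) (Fin 3) F} (h : M.IsSymm) : toMat (fromMat M) = M := by
  ext i j
  fin_cases i <;> fin_cases j <;>
    simp [toMat, fromMat, h.apply 0 1, h.apply 0 2, h.apply 1 2]

lemma fromMat_toMat (x : ((F × F × F) × F × F) × F) : fromMat (toMat x) = x := by
  obtain ⟨⟨⟨a, b, d⟩, e, f⟩, c⟩ := x
  simp [toMat, fromMat]

lemma toMat_zero : toMat (0 : ((F × F × F) × F × F) × F) = 0 := by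
  ext i j
  fin_cases i <;> fin_cases j <;>
    simp [toMat, Matrix.vecHead, Matrix.vecTail]

lemma toMat_eq_zero {x : ((F × F × F) × F × F) × F} : toMat x = 0 ↔ x = 0 := by
  constructor
  · intro h
    have h2 := fromMat_toMat x
    rw [h] at h2
    rw [← h2, ← toMat_zero (F := F), fromMat_toMat]
  · rintro rfl
    exact toMat_zero

noncomputable def matEquiv :
    {x : ((F × F × F) × F × F) × F // x ≠ 0 ∧ uu x.1.1 * x.2 = vv x.1.1 x.1.2} ≃
      {M : Matrix (Fin 3) (Fin 3) F // M.IsSymm ∧ M ≠ 0 ∧ M.det = 0} where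
  toFun x := ⟨toMat x.1, toMat_isSymm _,
    fun h => x.2.1 (toMat_eq_zero.mp h),
    by rw [toMat_det, sub_eq_zero]; exact x.2.2⟩
  invFun M := ⟨fromMat M.1, by
    obtain ⟨M, hs, hne, hdet⟩ := M
    refine ⟨fun h0 => hne ?_, ?_⟩
    · rw [← toMat_fromMat hs, h0, toMat_zero]
    · have h := toMat_det (fromMat M)
      rw [toMat_fromMat hs, hdet] at h
      exact (sub_eq_zero.mp h.symm)⟩
  left_inv x := Subtype.ext (fromMat_toMat _)
  right_inv M := Subtype.ext (toMat_fromMat M.2.1)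

lemma count_nonzero :
    Fintype.card {x : ((F × F × F) × F × F) × F // x ≠ 0 ∧ uu x.1.1 * x.2 = vv x.1.1 x.1.2} + 1 =
      Fintype.card {x : ((F × F × F) × F × F) × F // uu x.1.1 * x.2 = vv x.1.1 x.1.2} := by
  classical
  rw [Fintype.card_subtype, Fintype.card_subtype]
  have h0 : (0 : ((F × F × F) × F × F) × F) ∈
      Finset.univ.filter (fun x : ((F × F × F) × F × F) × F => uu x.1.1 * x.2 = vv x.1.1 x.1.2) := by
    exact Finset.mem_filter.mpr ⟨Finset.mem_univ _, by simp [uu, vv]⟩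
  have hset : (Finset.univ.filter
        (fun x : ((F × F × F) × F × F) × F => uu x.1.1 * x.2 = vv x.1.1 x.1.2)).erase 0
      = Finset.univ.filter
        (fun x : ((F × F × F) × F × F) × F => x ≠ 0 ∧ uu x.1.1 * x.2 = vv x.1.1 x.1.2) := by
    rw [← Finset.filter_ne', Finset.filter_filter]
    exact Finset.filter_congr (fun x _ => and_comm)
  rw [← Finset.card_erase_add_one h0, hset]

end Aux

/-- Over a finite field `F` with `q` elements, the number of nonzero singular symmetric
`3 × 3` matrices is `(q−1)(q²+1)(q²+q+1)`: the secant variety `M³₄` of the Veronese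
surface in `PG(5,q)` has `(q²+1)(q²+q+1)` points. -/
theorem card_secant_variety (F : Type*) [Field F] [Fintype F] :
    Fintype.card {M : Matrix (Fin 3) (Fin 3) F // M.IsSymm ∧ M ≠ 0 ∧ M.det = 0} =
      (Fintype.card F - 1) * (Fintype.card F ^ 2 + 1) *
        (Fintype.card F ^ 2 + Fintype.card F + 1) := by
  have h1 : Fintype.card {M : Matrix (Fin 3) (Fin 3) F // M.IsSymm ∧ M ≠ 0 ∧ M.det = 0} =
      Fintype.card {x : ((F × F × F) × F × F) × F //
        x ≠ 0 ∧ uu x.1.1 * x.2 = vv x.1.1 x.1.2} :=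
    (Fintype.card_congr matEquiv).symm
  have h2 := count_nonzero (F := F)
  rw [count_main] at h2
  rw [h1]
  obtain ⟨k, hk⟩ : ∃ k, Fintype.card F = k + 1 :=
    ⟨Fintype.card F - 1, (Nat.succ_pred_eq_of_pos Fintype.card_pos).symm⟩
  rw [hk] at h2 ⊢
  have hcube : (k + 1) ^ 3 - 1 = k ^ 3 + 3 * k ^ 2 + 3 * k := by
    have h3 : (k + 1) ^ 3 = k ^ 3 + 3 * k ^ 2 + 3 * k + 1 := by ring
    rw [h3, Nat.add_sub_cancel]
  rw [hcube] at h2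
  rw [show k + 1 - 1 = k from by omega]
  have key : k * ((k + 1) ^ 2 + 1) * ((k + 1) ^ 2 + (k + 1) + 1) + 1 =
      (k ^ 3 + 3 * k ^ 2 + 3 * k) * (k + 1) ^ 2 + (k + 1) ^ 3 := by ring
  exact Nat.add_right_cancel (h2.trans key.symm)
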